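/- Let {x_k}, {Δ_k} (k = 0,...,T) be generated by the TRFD algorithm. If ψ_{p,Δ_*}(x_k) > ε for k = 0,...,T−1, then Δ_k ≥ Δ_min(ε) := (1−α)θε / (4 L_{h,p} max{σ, L_J} c_{p,2}(m) c_{2,p}(n)²) for k = 0,...,T. -/

import Mathlib

open scoped ENNReal

noncomputable section

/-- The `p`-norm on `ℝ^n`, for `p ∈ [1,∞]`. -/
def pNorm (p : ℝ≥0∞) {n : ℕ} (x : Fin n → ℝ) : ℝ :=
  if p = ∞ then ⨆ i, |x i| else (∑ i, |x i| ^ p.toReal) ^ (1 / p.toReal)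

/-- The Euclidean norm on `ℝ^n`. -/
def eucNorm {n : ℕ} (x : Fin n → ℝ) : ℝ := Real.sqrt (∑ i, x i ^ 2)

/-- The operator norm of a matrix, induced by Euclidean norms. -/
def opNorm2 {m n : ℕ} (A : Matrix (Fin m) (Fin n) ℝ) : ℝ :=
  sSup ((fun v => eucNorm (A.mulVec v)) '' {v | eucNorm v ≤ 1})

/-- Forward finite-difference approximation of the Jacobian of `F` at `x` with stepsize `τ`:
the `j`-th column is `(F (x + τ e_j) - F x) / τ`. -/
def fdMatrix {n m : ℕ} (F : (Fin n → ℝ) → (Fin m → ℝ)) (x : Fin n → ℝ) (τ : ℝ) :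
    Matrix (Fin m) (Fin n) ℝ :=
  Matrix.of fun i j => (F (x + Pi.single j τ) i - F x i) / τ

/-- Stationarity measure `ψ_{p,r}(x)`. -/
def psi {n m : ℕ} (Ω : Set (Fin n → ℝ)) (F : (Fin n → ℝ) → (Fin m → ℝ))
    (h : (Fin m → ℝ) → ℝ) (J : (Fin n → ℝ) → Matrix (Fin m) (Fin n) ℝ)
    (p : ℝ≥0∞) (r : ℝ) (x : Fin n → ℝ) : ℝ :=
  r⁻¹ * (h (F x) -
    sInf ((fun s => h (F x + (J x).mulVec s)) '' {s | x + s ∈ Ω ∧ pNorm p s ≤ r}))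

/-- Approximate stationarity measure `η_{p,r}(x; A)`. -/
def eta {n m : ℕ} (Ω : Set (Fin n → ℝ)) (F : (Fin n → ℝ) → (Fin m → ℝ))
    (h : (Fin m → ℝ) → ℝ) (p : ℝ≥0∞) (r : ℝ) (x : Fin n → ℝ)
    (A : Matrix (Fin m) (Fin n) ℝ) : ℝ :=
  r⁻¹ * (h (F x) -
    sInf ((fun s => h (F x + A.mulVec s)) '' {s | x + s ∈ Ω ∧ pNorm p s ≤ r}))

/-- The TRFD algorithm: `x`, `τ`, `Δ`, `A`, `d`, `ρ` are the iterates, finite-difference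
stepsizes, trust-region radii, finite-difference Jacobian approximations, trial steps and
ratios generated by TRFD with parameters `ε, σ, α, θ, Δstar` from the point `x 0`. -/
def TRFDrun {n m : ℕ} (Ω : Set (Fin n → ℝ)) (F : (Fin n → ℝ) → (Fin m → ℝ))
    (h : (Fin m → ℝ) → ℝ) (p : ℝ≥0∞)
    (Lh cpm cnp ε σ α θ Δstar : ℝ)
    (x : ℕ → Fin n → ℝ) (τ Δ : ℕ → ℝ) (A : ℕ → Matrix (Fin m) (Fin n) ℝ)
    (d : ℕ → Fin n → ℝ) (ρ : ℕ → ℝ) : Prop :=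
  x 0 ∈ Ω ∧
  τ 0 = ε / (Lh * σ * cpm * cnp * Real.sqrt n) ∧
  τ 0 * Real.sqrt n ≤ Δ 0 ∧ Δ 0 ≤ Δstar ∧
  (∀ k, A k = fdMatrix F (x k) (τ k)) ∧
  (∀ k,
    -- unsuccessful iteration of type I
    (eta Ω F h p Δstar (x k) (A k) < ε / 2 ∧
      x (k + 1) = x k ∧ Δ (k + 1) = Δ k ∧ τ (k + 1) = τ k / 2) ∨
    (ε / 2 ≤ eta Ω F h p Δstar (x k) (A k) ∧
      -- the trial step is feasible and achieves a `θ`-fraction of the optimal model decrease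
      pNorm p (d k) ≤ Δ k ∧ x k + d k ∈ Ω ∧
      θ * (h (F (x k)) -
          sInf ((fun s => h (F (x k) + (A k).mulVec s)) ''
            {s | x k + s ∈ Ω ∧ pNorm p s ≤ Δ k})) ≤
        h (F (x k)) - h (F (x k) + (A k).mulVec (d k)) ∧
      ρ k = (h (F (x k)) - h (F (x k + d k))) /
            (h (F (x k)) - h (F (x k) + (A k).mulVec (d k))) ∧
      -- successful iteration
      ((α ≤ ρ k ∧ x (k + 1) = x k + d k ∧ Δ (k + 1) = min (2 * Δ k) Δstar ∧
          τ (k + 1) = τ k) ∨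
      -- unsuccessful iteration of type II
       (ρ k < α ∧ τ k * Real.sqrt n ≤ Δ k / 2 ∧
          x (k + 1) = x k ∧ Δ (k + 1) = Δ k / 2 ∧ τ (k + 1) = τ k) ∨
      -- unsuccessful iteration of type III
       (ρ k < α ∧ Δ k / 2 < τ k * Real.sqrt n ∧
          x (k + 1) = x k ∧ Δ (k + 1) = Δ k / 2 ∧ τ (k + 1) = τ k / 2))))

-- toE
def toE {n : ℕ} (v : Fin n → ℝ) : EuclideanSpace ℝ (Fin n) := (WithLp.equiv 2 _).symm v

lemma toE_add {n : ℕ} (v w : Fin n → ℝ) : toE (v + w) = toE v + toE w := rfl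
lemma toE_sub {n : ℕ} (v w : Fin n → ℝ) : toE (v - w) = toE v - toE w := rfl
lemma toE_smul {n : ℕ} (t : ℝ) (v : Fin n → ℝ) : toE (t • v) = t • toE v := rfl

lemma eucNorm_eq {n : ℕ} (v : Fin n → ℝ) : eucNorm v = ‖toE v‖ := by
  rw [EuclideanSpace.norm_eq]
  simp [eucNorm, toE, Real.norm_eq_abs, sq_abs]

lemma eucNorm_nonneg {n : ℕ} (v : Fin n → ℝ) : 0 ≤ eucNorm v := by
  rw [eucNorm_eq]; exact norm_nonneg _

lemma eucNorm_smul {n : ℕ} (t : ℝ) (v : Fin n → ℝ) : eucNorm (t • v) = |t| * eucNorm v := by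
  rw [eucNorm_eq, eucNorm_eq, toE_smul, norm_smul, Real.norm_eq_abs]

lemma eucNorm_eq_zero {n : ℕ} {v : Fin n → ℝ} (hv : eucNorm v = 0) : v = 0 := by
  rw [eucNorm_eq] at hv
  have : toE v = 0 := norm_eq_zero.mp hv
  have : v = 0 := by
    funext i
    have := congrFun (congrArg (WithLp.equiv 2 (Fin n → ℝ)) this) i
    simpa [toE] using this
  exact this

lemma abs_le_eucNorm {n : ℕ} (v : Fin n → ℝ) (j : Fin n) : |v j| ≤ eucNorm v := by
  rw [← Real.sqrt_sq_eq_abs]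
  exact Real.sqrt_le_sqrt (Finset.single_le_sum (fun i _ => sq_nonneg (v i)) (Finset.mem_univ j))

lemma sum_abs_le_sqrt_mul_eucNorm {n : ℕ} (v : Fin n → ℝ) :
    ∑ j, |v j| ≤ Real.sqrt n * eucNorm v := by
  have h1 : (∑ j, |v j|) ^ 2 ≤ (n : ℝ) * ∑ j, v j ^ 2 := by
    have := sq_sum_le_card_mul_sum_sq (s := (Finset.univ : Finset (Fin n)))
      (f := fun j => |v j|)
    simpa [sq_abs] using this
  have h2 : ∑ j, |v j| = Real.sqrt ((∑ j, |v j|) ^ 2) := by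
    rw [Real.sqrt_sq (Finset.sum_nonneg fun j _ => abs_nonneg _)]
  rw [h2, eucNorm, ← Real.sqrt_mul (by positivity)]
  exact Real.sqrt_le_sqrt h1

lemma mulVec_eq_sum {m n : ℕ} (M : Matrix (Fin m) (Fin n) ℝ) (v : Fin n → ℝ) :
    M.mulVec v = ∑ j, v j • (fun i => M i j) := by
  funext i
  simp [Matrix.mulVec, dotProduct, Finset.sum_apply, mul_comm]

lemma eucNorm_mulVec_le {m n : ℕ} (M : Matrix (Fin m) (Fin n) ℝ) (v : Fin n → ℝ) :
    eucNorm (M.mulVec v) ≤ ∑ j, |v j| * eucNorm (fun i => M i j) := by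
  rw [eucNorm_eq, mulVec_eq_sum]
  have : toE (∑ j, v j • (fun i => M i j)) = ∑ j, v j • toE (fun i => M i j) := by
    simp [toE]
  rw [this]
  refine (norm_sum_le _ _).trans ?_
  refine Finset.sum_le_sum fun j _ => ?_
  rw [norm_smul, Real.norm_eq_abs, eucNorm_eq]

lemma opNorm2_bddAbove {m n : ℕ} (M : Matrix (Fin m) (Fin n) ℝ) :
    (fun v => eucNorm (M.mulVec v)) '' {v | eucNorm v ≤ 1} ∈
      {S : Set ℝ | BddAbove S} := by
  refine ⟨∑ j, eucNorm (fun i => M i j), ?_⟩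
  rintro - ⟨v, hv, rfl⟩
  refine (eucNorm_mulVec_le M v).trans ?_
  refine Finset.sum_le_sum fun j _ => ?_
  have h1 : |v j| ≤ 1 := (abs_le_eucNorm v j).trans hv
  nlinarith [eucNorm_nonneg (fun i => M i j), abs_nonneg (v j)]

lemma eucNorm_mulVec_le_opNorm2 {m n : ℕ} (M : Matrix (Fin m) (Fin n) ℝ) (v : Fin n → ℝ) :
    eucNorm (M.mulVec v) ≤ opNorm2 M * eucNorm v := by
  rcases eq_or_lt_of_le (eucNorm_nonneg v) with h0 | h0
  · have hv : v = 0 := eucNorm_eq_zero h0.symm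
    subst hv
    simp [Matrix.mulVec_zero, ← h0]
    have : eucNorm (0 : Fin m → ℝ) = 0 := by
      simpa using eucNorm_smul 0 (0 : Fin m → ℝ)
    simp [this]
  · set c := eucNorm v with hc
    have hmem : eucNorm (M.mulVec (c⁻¹ • v)) ∈
        (fun v => eucNorm (M.mulVec v)) '' {v | eucNorm v ≤ 1} := by
      refine ⟨c⁻¹ • v, ?_, rfl⟩
      simp only [Set.mem_setOf_eq, eucNorm_smul, abs_of_nonneg (inv_nonneg.mpr h0.le)]
      rw [inv_mul_cancel₀ h0.ne']
    have := le_csSup (opNorm2_bddAbove M) hmem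
    rw [Matrix.mulVec_smul, eucNorm_smul, abs_of_nonneg (inv_nonneg.mpr h0.le)] at this
    have := (inv_mul_le_iff₀ h0).mp this
    rw [opNorm2]
    linarith [this]

-- pNorm lemmas
lemma pNorm_nonneg (p : ℝ≥0∞) {n : ℕ} (v : Fin n → ℝ) : 0 ≤ pNorm p v := by
  unfold pNorm
  split
  · exact Real.iSup_nonneg fun i => abs_nonneg _
  · exact Real.rpow_nonneg (Finset.sum_nonneg fun i _ => Real.rpow_nonneg (abs_nonneg _) _) _

lemma toReal_pos_of_one_le {p : ℝ≥0∞} (hp : 1 ≤ p) (hp' : p ≠ ∞) : 1 ≤ p.toReal := by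
  rw [← ENNReal.toReal_one]
  exact ENNReal.toReal_mono hp' hp

lemma pNorm_zero {p : ℝ≥0∞} (hp : 1 ≤ p) {n : ℕ} : pNorm p (0 : Fin n → ℝ) = 0 := by
  unfold pNorm
  split
  · simp [Real.iSup_const_zero]
  · rename_i hp'
    have hq : 1 ≤ p.toReal := toReal_pos_of_one_le hp hp'
    have hq0 : p.toReal ≠ 0 := by linarith
    simp only [Pi.zero_apply, abs_zero, Real.zero_rpow hq0, Finset.sum_const, smul_zero]
    rw [Real.zero_rpow (by positivity)]

lemma pNorm_smul {p : ℝ≥0∞} (hp : 1 ≤ p) {n : ℕ} {t : ℝ} (ht : 0 ≤ t) (v : Fin n → ℝ) :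
    pNorm p (t • v) = t * pNorm p v := by
  unfold pNorm
  split
  · simp only [Pi.smul_apply, smul_eq_mul, abs_mul, abs_of_nonneg ht]
    exact (Real.mul_iSup_of_nonneg ht _).symm
  · rename_i hp'
    have hq : 1 ≤ p.toReal := toReal_pos_of_one_le hp hp'
    have hq0 : p.toReal ≠ 0 := by linarith
    have h1 : ∀ i, |(t • v) i| ^ p.toReal = t ^ p.toReal * |v i| ^ p.toReal := by
      intro i
      simp only [Pi.smul_apply, smul_eq_mul, abs_mul, abs_of_nonneg ht]
      exact Real.mul_rpow ht (abs_nonneg _)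
    simp only [h1, ← Finset.mul_sum]
    rw [Real.mul_rpow (by positivity) (Finset.sum_nonneg fun i _ => by positivity),
      ← Real.rpow_mul ht, mul_one_div_cancel hq0, Real.rpow_one]


-- Taylor bound with Lipschitz Jacobian
lemma taylor_bound {n m : ℕ} {F : (Fin n → ℝ) → (Fin m → ℝ)}
    {J : (Fin n → ℝ) → Matrix (Fin m) (Fin n) ℝ}
    (hJ : ∀ y, HasFDerivAt F (LinearMap.toContinuousLinearMap (Matrix.mulVecLin (J y))) y)
    {LJ : ℝ}
    (hJLip : ∀ y z, opNorm2 (J y - J z) ≤ LJ * eucNorm (y - z))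
    (x d : Fin n → ℝ) :
    eucNorm (F (x + d) - F x - (J x).mulVec d) ≤ LJ / 2 * eucNorm d ^ 2 := by
  set E := (EuclideanSpace.equiv (Fin m) ℝ).symm with hE
  have hEtoE : ∀ v : Fin m → ℝ, E v = toE v := fun v => rfl
  set g : ℝ → EuclideanSpace ℝ (Fin m) :=
    fun t => toE (F (x + t • d)) - toE (F x) - t • toE ((J x).mulVec d) with hgdef
  set g' : ℝ → EuclideanSpace ℝ (Fin m) :=
    fun t => toE ((J (x + t • d) - J x).mulVec d) with hg'def
  have hg : ∀ t : ℝ, HasDerivAt g (g' t) t := by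
    intro t
    have hc : HasDerivAt (fun t : ℝ => x + t • d) d t := by
      simpa using ((hasDerivAt_id t).smul_const d).const_add x
    have h1 : HasDerivAt (fun t : ℝ => F (x + t • d)) ((J (x + t • d)).mulVec d) t := by
      have := (hJ (x + t • d)).comp_hasDerivAt t hc
      exact this
    have h2 : HasDerivAt (fun t : ℝ => E (F (x + t • d))) (E ((J (x + t • d)).mulVec d)) t :=
      E.toContinuousLinearMap.hasFDerivAt.comp_hasDerivAt t h1
    have h3 : HasDerivAt (fun t : ℝ => t • toE ((J x).mulVec d)) (toE ((J x).mulVec d)) t := by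
      simpa using (hasDerivAt_id t).smul_const (toE ((J x).mulVec d))
    have h4 := (h2.sub_const (toE (F x))).sub h3
    have h5 : E ((J (x + t • d)).mulVec d) - toE ((J x).mulVec d)
        = toE ((J (x + t • d) - J x).mulVec d) := by
      rw [hEtoE, Matrix.sub_mulVec, toE_sub]
    rw [h5] at h4
    exact h4
  have key := image_norm_le_of_norm_deriv_right_le_deriv_boundary (f := g) (f' := g')
      (a := 0) (b := 1)
      (B := fun t => LJ * eucNorm d ^ 2 * (t ^ 2 / 2)) (B' := fun t => LJ * eucNorm d ^ 2 * t)
      (fun t _ => (hg t).continuousAt.continuousWithinAt)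
      (fun t ht => (hg t).hasDerivWithinAt)
      (by simp [hgdef])
      (fun s => by
        have := ((hasDerivAt_pow 2 s).div_const 2).const_mul (LJ * eucNorm d ^ 2)
        refine this.congr_deriv ?_
        push_cast
        ring)
      (fun t ht => by
        have h5 : ‖g' t‖ = eucNorm ((J (x + t • d) - J x).mulVec d) := (eucNorm_eq _).symm
        rw [h5]
        calc eucNorm ((J (x + t • d) - J x).mulVec d)
            ≤ opNorm2 (J (x + t • d) - J x) * eucNorm d := eucNorm_mulVec_le_opNorm2 _ _
          _ ≤ LJ * eucNorm (x + t • d - x) * eucNorm d :=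
              mul_le_mul_of_nonneg_right (hJLip _ _) (eucNorm_nonneg _)
          _ = LJ * eucNorm d ^ 2 * t := by
              rw [add_sub_cancel_left, eucNorm_smul, abs_of_nonneg ht.1]
              ring)
  have h6 := key (x := 1) ⟨zero_le_one, le_refl 1⟩
  have h7 : g 1 = toE (F (x + d) - F x - (J x).mulVec d) := by
    rw [hgdef]
    simp only [one_smul]
    rw [toE_sub, toE_sub]
  rw [h7] at h6
  rw [eucNorm_eq]
  calc ‖toE (F (x + d) - F x - (J x).mulVec d)‖ ≤ LJ * eucNorm d ^ 2 * (1 ^ 2 / 2) := h6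
    _ = LJ / 2 * eucNorm d ^ 2 := by ring

lemma eucNorm_add_le {n : ℕ} (v w : Fin n → ℝ) : eucNorm (v + w) ≤ eucNorm v + eucNorm w := by
  rw [eucNorm_eq, eucNorm_eq, eucNorm_eq, toE_add]
  exact norm_add_le _ _

lemma eucNorm_neg {n : ℕ} (v : Fin n → ℝ) : eucNorm (-v) = eucNorm v := by
  have : (-v) = (-1 : ℝ) • v := by funext i; simp
  rw [this, eucNorm_smul]
  simp

lemma eucNorm_single {n : ℕ} (j : Fin n) (t : ℝ) : eucNorm (Pi.single j t) = |t| := by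
  unfold eucNorm
  rw [show ∑ i, Pi.single j t i ^ 2 = t ^ 2 by
    rw [Finset.sum_eq_single j]
    · simp
    · intro b _ hb; simp [Pi.single_apply, hb]
    · simp]
  exact Real.sqrt_sq_eq_abs t


lemma fd_col_bound {n m : ℕ} {F : (Fin n → ℝ) → (Fin m → ℝ)}
    {J : (Fin n → ℝ) → Matrix (Fin m) (Fin n) ℝ}
    (hJ : ∀ y, HasFDerivAt F (LinearMap.toContinuousLinearMap (Matrix.mulVecLin (J y))) y)
    {LJ : ℝ}
    (hJLip : ∀ y z, opNorm2 (J y - J z) ≤ LJ * eucNorm (y - z))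
    {τ : ℝ} (hτ : 0 < τ) (x : Fin n → ℝ) (j : Fin n) :
    eucNorm (fun i => J x i j - fdMatrix F x τ i j) ≤ LJ / 2 * τ := by
  have heq : (fun i => J x i j - fdMatrix F x τ i j)
      = τ⁻¹ • (-(F (x + Pi.single j τ) - F x - (J x).mulVec (Pi.single j τ))) := by
    funext i
    simp only [fdMatrix, Matrix.of_apply, Pi.smul_apply, Pi.neg_apply, Pi.sub_apply,
      Matrix.mulVec_single, smul_eq_mul]
    field_simp
    simp [Matrix.col_apply]
  rw [heq, eucNorm_smul, abs_of_nonneg (inv_nonneg.mpr hτ.le), eucNorm_neg]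
  have h5 := taylor_bound hJ hJLip x (Pi.single j τ)
  rw [eucNorm_single, abs_of_nonneg hτ.le] at h5
  have h6 := mul_le_mul_of_nonneg_left h5 (inv_nonneg.mpr hτ.le)
  refine h6.trans (le_of_eq ?_)
  field_simp

lemma fd_err_bound {n m : ℕ} {F : (Fin n → ℝ) → (Fin m → ℝ)}
    {J : (Fin n → ℝ) → Matrix (Fin m) (Fin n) ℝ}
    (hJ : ∀ y, HasFDerivAt F (LinearMap.toContinuousLinearMap (Matrix.mulVecLin (J y))) y)
    {LJ : ℝ} (hLJ : 0 < LJ)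
    (hJLip : ∀ y z, opNorm2 (J y - J z) ≤ LJ * eucNorm (y - z))
    {τ : ℝ} (hτ : 0 < τ) (x v : Fin n → ℝ) :
    eucNorm ((J x - fdMatrix F x τ).mulVec v)
      ≤ LJ / 2 * (τ * Real.sqrt n) * eucNorm v := by
  refine (eucNorm_mulVec_le _ _).trans ?_
  calc ∑ j, |v j| * eucNorm (fun i => (J x - fdMatrix F x τ) i j)
      ≤ ∑ j, |v j| * (LJ / 2 * τ) := by
        refine Finset.sum_le_sum fun j _ => ?_
        refine mul_le_mul_of_nonneg_left ?_ (abs_nonneg _)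
        simpa [Matrix.sub_apply] using fd_col_bound hJ hJLip hτ x j
    _ = (LJ / 2 * τ) * ∑ j, |v j| := by rw [← Finset.sum_mul]; ring
    _ ≤ (LJ / 2 * τ) * (Real.sqrt n * eucNorm v) :=
        mul_le_mul_of_nonneg_left (sum_abs_le_sqrt_mul_eucNorm _) (by positivity)
    _ = LJ / 2 * (τ * Real.sqrt n) * eucNorm v := by ring

set_option maxHeartbeats 2000000 in
/-- Lemma 3.3: lower bound on the trust-region radii. -/
theorem stmt9
    {n m : ℕ} (hn : 1 ≤ n) (hm : 1 ≤ m) (p : ℝ≥0∞) (hp : 1 ≤ p)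
    (Ω : Set (Fin n → ℝ)) (hΩne : Ω.Nonempty) (hΩcl : IsClosed Ω) (hΩcv : Convex ℝ Ω)
    (F : (Fin n → ℝ) → (Fin m → ℝ)) (J : (Fin n → ℝ) → Matrix (Fin m) (Fin n) ℝ)
    (hJ : ∀ y, HasFDerivAt F (LinearMap.toContinuousLinearMap (Matrix.mulVecLin (J y))) y)
    (LJ : ℝ) (hLJ : 0 < LJ)
    (hJLip : ∀ y z, opNorm2 (J y - J z) ≤ LJ * eucNorm (y - z))
    (h : (Fin m → ℝ) → ℝ) (hconv : ConvexOn ℝ Set.univ h)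
    (Lh : ℝ) (hLh : 0 < Lh)
    (hhLip : ∀ z w, |h z - h w| ≤ Lh * pNorm p (z - w))
    (cnp cpm : ℝ) (hcnp1 : 1 ≤ cnp) (hcpm1 : 1 ≤ cpm)
    (hcnp : ∀ v : Fin n → ℝ, eucNorm v ≤ cnp * pNorm p v)
    (hcpm : ∀ z : Fin m → ℝ, pNorm p z ≤ cpm * eucNorm z)
    (ε σ α θ Δstar : ℝ) (hε : 0 < ε) (hσ : 0 < σ)
    (hα0 : 0 < α) (hα1 : α < 1) (hθ0 : 0 < θ) (hθ1 : θ ≤ 1)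
    (x : ℕ → Fin n → ℝ) (τ Δ : ℕ → ℝ) (A : ℕ → Matrix (Fin m) (Fin n) ℝ)
    (d : ℕ → Fin n → ℝ) (ρ : ℕ → ℝ)
    (hrun : TRFDrun Ω F h p Lh cpm cnp ε σ α θ Δstar x τ Δ A d ρ)
    (T : ℕ) (hT : ∀ k < T, ε < psi Ω F h J p Δstar (x k)) :
    ∀ k ≤ T, (1 - α) * θ * ε / (4 * Lh * max σ LJ * cpm * cnp ^ 2) ≤ Δ k := by
  obtain ⟨hx0, hτ0, hτΔ0, hΔ0star, hA, hstep⟩ := hrun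
  have hcnp0 : (0:ℝ) < cnp := lt_of_lt_of_le one_pos hcnp1
  have hcpm0 : (0:ℝ) < cpm := lt_of_lt_of_le one_pos hcpm1
  have hnpos : (0:ℝ) < (n:ℝ) := by exact_mod_cast Nat.lt_of_lt_of_le Nat.zero_lt_one hn
  have hsn : (0:ℝ) < Real.sqrt n := Real.sqrt_pos.mpr hnpos
  have hM : (0:ℝ) < max σ LJ := lt_of_lt_of_le hσ (le_max_left _ _)
  have hMLJ : LJ ≤ max σ LJ := le_max_right _ _
  have hτ0pos : 0 < τ 0 := by rw [hτ0]; positivity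
  set Dmin : ℝ := (1 - α) * θ * ε / (4 * Lh * max σ LJ * cpm * cnp ^ 2) with hDmin
  have h1α : 0 < 1 - α := by linarith
  -- Invariant
  have hinv : ∀ k, x k ∈ Ω ∧ 0 < τ k ∧ τ k * Real.sqrt n ≤ Δ k ∧ Δ k ≤ Δstar := by
    intro k
    induction k with
    | zero => exact ⟨hx0, hτ0pos, hτΔ0, hΔ0star⟩
    | succ k ih =>
      obtain ⟨hxk, hτk, hτΔk, hΔk⟩ := ih
      have hΔpos : 0 < Δ k := lt_of_lt_of_le (mul_pos hτk hsn) hτΔk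
      rcases hstep k with ⟨-, hx, hΔ, hτ⟩ | ⟨-, -, hxd, -, -, hcase⟩
      · refine ⟨hx ▸ hxk, by rw [hτ]; linarith, ?_, hΔ ▸ hΔk⟩
        rw [hτ, hΔ]
        nlinarith [mul_pos hτk hsn]
      · rcases hcase with ⟨-, hx, hΔ, hτ⟩ | ⟨-, h2, hx, hΔ, hτ⟩ | ⟨-, h2, hx, hΔ, hτ⟩
        · refine ⟨hx ▸ hxd, hτ ▸ hτk, ?_, hΔ ▸ min_le_right _ _⟩
          rw [hτ, hΔ]
          exact le_min (by linarith) (by linarith)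
        · exact ⟨hx ▸ hxk, hτ ▸ hτk, by rw [hτ, hΔ]; exact h2, by rw [hΔ]; linarith⟩
        · refine ⟨hx ▸ hxk, by rw [hτ]; linarith, ?_, by rw [hΔ]; linarith⟩
          rw [hτ, hΔ]
          linarith
  -- Key estimate on unsuccessful iterations of type II/III
  have hkey : ∀ k, ε / 2 ≤ eta Ω F h p Δstar (x k) (A k) →
      pNorm p (d k) ≤ Δ k → x k + d k ∈ Ω →
      θ * (h (F (x k)) -
          sInf ((fun s => h (F (x k) + (A k).mulVec s)) ''
            {s | x k + s ∈ Ω ∧ pNorm p s ≤ Δ k})) ≤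
        h (F (x k)) - h (F (x k) + (A k).mulVec (d k)) →
      ρ k = (h (F (x k)) - h (F (x k + d k))) /
            (h (F (x k)) - h (F (x k) + (A k).mulVec (d k))) →
      ρ k < α → 2 * Dmin ≤ Δ k := by
    intro k hη hdfe hdΩ hθdec hρeq hρα
    obtain ⟨hxk, hτk, hτΔk, hΔkstar⟩ := hinv k
    have hΔpos : 0 < Δ k := lt_of_lt_of_le (mul_pos hτk hsn) hτΔk
    have hΔstarpos : 0 < Δstar := lt_of_lt_of_le hΔpos hΔkstar
    unfold eta at hη
    set S1 := (fun s => h (F (x k) + (A k).mulVec s)) ''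
        {s | x k + s ∈ Ω ∧ pNorm p s ≤ Δ k} with hS1def
    set S2 := (fun s => h (F (x k) + (A k).mulVec s)) ''
        {s | x k + s ∈ Ω ∧ pNorm p s ≤ Δstar} with hS2def
    have hS2ne : S2.Nonempty :=
      ⟨_, ⟨0, ⟨by simpa using hxk, by rw [pNorm_zero hp]; exact hΔstarpos.le⟩, rfl⟩⟩
    have hbdd : ∀ r : ℝ, 0 ≤ r →
        BddBelow ((fun s => h (F (x k) + (A k).mulVec s)) ''
          {s | x k + s ∈ Ω ∧ pNorm p s ≤ r}) := by
      intro r hr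
      refine ⟨h (F (x k)) - Lh * (cpm * ((cnp * r) * ∑ j, eucNorm (fun i => A k i j))), ?_⟩
      rintro z ⟨s, ⟨hsΩ, hsr⟩, rfl⟩
      have h1 : |h (F (x k) + (A k).mulVec s) - h (F (x k))| ≤ Lh * pNorm p ((A k).mulVec s) := by
        have := hhLip (F (x k) + (A k).mulVec s) (F (x k))
        rwa [add_sub_cancel_left] at this
      have h2 : pNorm p ((A k).mulVec s)
          ≤ cpm * ((cnp * r) * ∑ j, eucNorm (fun i => A k i j)) := by
        refine (hcpm _).trans (mul_le_mul_of_nonneg_left ?_ hcpm0.le)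
        refine (eucNorm_mulVec_le _ _).trans ?_
        rw [Finset.mul_sum]
        refine Finset.sum_le_sum fun j _ => ?_
        have hs2 : |s j| ≤ cnp * r :=
          (abs_le_eucNorm s j).trans ((hcnp s).trans (mul_le_mul_of_nonneg_left hsr hcnp0.le))
        exact mul_le_mul_of_nonneg_right hs2 (eucNorm_nonneg _)
      have h3 := neg_abs_le (h (F (x k) + (A k).mulVec s) - h (F (x k)))
      have h4 := mul_le_mul_of_nonneg_left h2 hLh.le
      simp only [Set.mem_setOf_eq]
      linarith only [h1, h3, h4]
    have hstar : Δstar * (ε / 2) ≤ h (F (x k)) - sInf S2 := by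
      have h0 := mul_le_mul_of_nonneg_left hη hΔstarpos.le
      rwa [← mul_assoc, mul_inv_cancel₀ hΔstarpos.ne', one_mul] at h0
    set t := Δ k / Δstar with htdef
    have ht0 : 0 < t := div_pos hΔpos hΔstarpos
    have ht1 : t ≤ 1 := (div_le_one hΔstarpos).mpr hΔkstar
    have htΔ : t * Δstar = Δ k := div_mul_cancel₀ _ hΔstarpos.ne'
    have hA1 : ∀ z ∈ S2, sInf S1 ≤ (1 - t) * h (F (x k)) + t * z := by
      rintro - ⟨s, ⟨hsΩ, hss⟩, rfl⟩
      have hfeas : x k + t • s ∈ Ω := by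
        have hmem := hΩcv hxk hsΩ (by linarith only [ht1] : (0:ℝ) ≤ 1 - t) ht0.le (by ring)
        have heq : (1 - t) • x k + t • (x k + s) = x k + t • s := by module
        rwa [heq] at hmem
      have hnorm : pNorm p (t • s) ≤ Δ k := by
        rw [pNorm_smul hp ht0.le]
        calc t * pNorm p s ≤ t * Δstar := mul_le_mul_of_nonneg_left hss ht0.le
          _ = Δ k := htΔ
      have hle := csInf_le (hbdd (Δ k) hΔpos.le)
        (⟨t • s, ⟨hfeas, hnorm⟩, rfl⟩ :
          h (F (x k) + (A k).mulVec (t • s)) ∈ S1)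
      have hcv := hconv.2 (Set.mem_univ (F (x k)))
        (Set.mem_univ (F (x k) + (A k).mulVec s))
        (by linarith only [ht1] : (0:ℝ) ≤ 1 - t) ht0.le (by ring)
      have heq2 : (1 - t) • F (x k) + t • (F (x k) + (A k).mulVec s)
          = F (x k) + (A k).mulVec (t • s) := by
        rw [Matrix.mulVec_smul]
        module
      rw [heq2] at hcv
      exact hle.trans hcv
    have hS1b : t * (h (F (x k)) - sInf S2) ≤ h (F (x k)) - sInf S1 := by
      have h3 : (sInf S1 - (1 - t) * h (F (x k))) / t ≤ sInf S2 := by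
        refine le_csInf hS2ne fun z hz => ?_
        rw [div_le_iff₀ ht0]
        linarith only [hA1 z hz]
      rw [div_le_iff₀ ht0] at h3
      linarith only [h3]
    have hD1 : Δ k * (ε / 2) ≤ h (F (x k)) - sInf S1 := by
      have h4 := mul_le_mul_of_nonneg_left hstar ht0.le
      calc Δ k * (ε / 2) = t * (Δstar * (ε / 2)) := by rw [← mul_assoc, htΔ]
        _ ≤ t * (h (F (x k)) - sInf S2) := h4
        _ ≤ _ := hS1b
    set D : ℝ := h (F (x k)) - h (F (x k) + (A k).mulVec (d k)) with hDdef
    have hDθ : θ * (Δ k * (ε / 2)) ≤ D :=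
      le_trans (mul_le_mul_of_nonneg_left hD1 hθ0.le) hθdec
    have hDpos : 0 < D := lt_of_lt_of_le (by positivity) hDθ
    have hnum : h (F (x k)) - h (F (x k + d k)) < α * D := by
      rw [hρeq] at hρα
      have := (div_lt_iff₀ hDpos).mp hρα
      linarith only [this]
    set N : ℝ := h (F (x k + d k)) - h (F (x k) + (A k).mulVec (d k)) with hNdef
    have hNlower : (1 - α) * D < N := by
      have hid : h (F (x k)) - h (F (x k + d k)) = D - N := by rw [hDdef, hNdef]; ring
      rw [hid] at hnum
      linarith only [hnum]
    -- upper bound on N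
    have hdnorm : eucNorm (d k) ≤ cnp * Δ k :=
      (hcnp _).trans (mul_le_mul_of_nonneg_left hdfe hcnp0.le)
    have hTay := taylor_bound hJ hJLip (x k) (d k)
    have hterm2 : eucNorm ((J (x k) - A k).mulVec (d k))
        ≤ LJ / 2 * Δ k * eucNorm (d k) := by
      have h5 : eucNorm ((J (x k) - A k).mulVec (d k))
          ≤ LJ / 2 * (τ k * Real.sqrt n) * eucNorm (d k) := by
        rw [hA k]
        exact fd_err_bound hJ hLJ hJLip hτk (x k) (d k)
      refine h5.trans ?_
      have h6 := mul_le_mul_of_nonneg_left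
        (mul_le_mul_of_nonneg_right hτΔk (eucNorm_nonneg (d k)))
        (by positivity : (0:ℝ) ≤ LJ / 2)
      linarith only [h6]
    have hdecomp : F (x k + d k) - (F (x k) + (A k).mulVec (d k))
        = (F (x k + d k) - F (x k) - (J (x k)).mulVec (d k))
          + ((J (x k) - A k).mulVec (d k)) := by
      rw [Matrix.sub_mulVec]
      abel
    have hNupper : N ≤ Lh * (cpm * (LJ / 2 * eucNorm (d k) ^ 2
        + LJ / 2 * Δ k * eucNorm (d k))) := by
      have h6 : N ≤ |h (F (x k + d k)) - h (F (x k) + (A k).mulVec (d k))| := le_abs_self _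
      have h7 := hhLip (F (x k + d k)) (F (x k) + (A k).mulVec (d k))
      have h8 : pNorm p (F (x k + d k) - (F (x k) + (A k).mulVec (d k)))
          ≤ cpm * (LJ / 2 * eucNorm (d k) ^ 2 + LJ / 2 * Δ k * eucNorm (d k)) := by
        refine (hcpm _).trans (mul_le_mul_of_nonneg_left ?_ hcpm0.le)
        rw [hdecomp]
        exact (eucNorm_add_le _ _).trans (add_le_add hTay hterm2)
      have h9 := mul_le_mul_of_nonneg_left h8 hLh.le
      exact le_trans h6 (le_trans h7 h9)
    have hd0 : 0 ≤ eucNorm (d k) := eucNorm_nonneg _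
    have e1 : eucNorm (d k) ^ 2 ≤ cnp ^ 2 * Δ k ^ 2 := by
      have := pow_le_pow_left₀ hd0 hdnorm 2
      rwa [mul_pow] at this
    have e2 : Δ k * eucNorm (d k) ≤ cnp * Δ k ^ 2 := by
      have := mul_le_mul_of_nonneg_left hdnorm hΔpos.le
      linarith only [this]
    have e3 : cnp * Δ k ^ 2 ≤ cnp ^ 2 * Δ k ^ 2 :=
      mul_le_mul_of_nonneg_right (le_self_pow₀ hcnp1 (by norm_num)) (sq_nonneg (Δ k))
    have hinner : LJ / 2 * eucNorm (d k) ^ 2 + LJ / 2 * Δ k * eucNorm (d k)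
        ≤ LJ * cnp ^ 2 * Δ k ^ 2 := by
      have i1 := mul_le_mul_of_nonneg_left e1 (by positivity : (0:ℝ) ≤ LJ / 2)
      have i2 := mul_le_mul_of_nonneg_left (e2.trans e3) (by positivity : (0:ℝ) ≤ LJ / 2)
      linarith only [i1, i2]
    have hfinal : (1 - α) * (θ * (Δ k * (ε / 2))) < Lh * cpm * LJ * cnp ^ 2 * Δ k ^ 2 := by
      have lhs := mul_le_mul_of_nonneg_left hDθ h1α.le
      have rhs : Lh * (cpm * (LJ / 2 * eucNorm (d k) ^ 2 + LJ / 2 * Δ k * eucNorm (d k)))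
          ≤ Lh * cpm * LJ * cnp ^ 2 * Δ k ^ 2 := by
        have := mul_le_mul_of_nonneg_left hinner (mul_pos hLh hcpm0).le
        linarith only [this]
      calc (1 - α) * (θ * (Δ k * (ε / 2))) ≤ (1 - α) * D := lhs
        _ < N := hNlower
        _ ≤ _ := hNupper
        _ ≤ _ := rhs
    -- conclude
    have hC : (0:ℝ) < Lh * max σ LJ * cpm * cnp ^ 2 := by positivity
    have hcancel : 2 * Dmin * (Lh * max σ LJ * cpm * cnp ^ 2) = (1 - α) * θ * ε / 2 := by
      rw [hDmin]
      field_simp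
      ring
    have hineq2 : (1 - α) * θ * ε / 2 * Δ k
        < Lh * max σ LJ * cpm * cnp ^ 2 * Δ k * Δ k := by
      calc (1 - α) * θ * ε / 2 * Δ k = (1 - α) * (θ * (Δ k * (ε / 2))) := by ring
        _ < Lh * cpm * LJ * cnp ^ 2 * Δ k ^ 2 := hfinal
        _ ≤ Lh * max σ LJ * cpm * cnp ^ 2 * Δ k * Δ k := by
            have := mul_le_mul_of_nonneg_right hMLJ
              (by positivity : (0:ℝ) ≤ Lh * cpm * cnp ^ 2 * Δ k ^ 2)
            linarith only [this]
    have hineq3 : (1 - α) * θ * ε / 2 < Lh * max σ LJ * cpm * cnp ^ 2 * Δ k :=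
      lt_of_mul_lt_mul_right (by linarith only [hineq2]) hΔpos.le
    rw [← hcancel] at hineq3
    have := (mul_lt_mul_iff_of_pos_right hC).mp (by linarith only [hineq3] :
      2 * Dmin * (Lh * max σ LJ * cpm * cnp ^ 2) < Δ k * (Lh * max σ LJ * cpm * cnp ^ 2))
    linarith only [this]
  -- Main induction
  have main : ∀ k, Dmin ≤ Δ k := by
    intro k
    induction k with
    | zero =>
      have hrhs : ε / (Lh * σ * cpm * cnp * Real.sqrt n) * Real.sqrt n
          = ε / (Lh * σ * cpm * cnp) := by
        rw [div_mul_eq_mul_div]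
        rw [show Lh * σ * cpm * cnp * Real.sqrt n = (Lh * σ * cpm * cnp) * Real.sqrt n by ring]
        rw [mul_comm ε (Real.sqrt n), mul_comm (Lh * σ * cpm * cnp) (Real.sqrt n)]
        exact mul_div_mul_left _ _ hsn.ne'
      have hbase2 : Dmin ≤ ε / (Lh * σ * cpm * cnp) := by
        rw [hDmin, div_le_div_iff₀ (by positivity) (by positivity)]
        have h1 : (1 - α) * θ ≤ 1 := by nlinarith
        have h2 : Lh * σ * cpm * cnp ≤ 4 * Lh * max σ LJ * cpm * cnp ^ 2 := by
          have c1 : cnp ≤ cnp ^ 2 := by nlinarith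
          have e1 := mul_le_mul_of_nonneg_left
            (mul_le_mul (le_max_left σ LJ) c1 hcnp0.le hM.le) (mul_pos hLh hcpm0).le
          nlinarith [e1, mul_pos (mul_pos (mul_pos hLh hM) hcpm0) (pow_pos hcnp0 2)]
        calc (1 - α) * θ * ε * (Lh * σ * cpm * cnp)
            ≤ 1 * (ε * (Lh * σ * cpm * cnp)) := by
              have h3 := mul_le_mul_of_nonneg_right h1
                (le_of_lt (by positivity : (0:ℝ) < ε * (Lh * σ * cpm * cnp)))
              calc (1 - α) * θ * ε * (Lh * σ * cpm * cnp)
                  = (1 - α) * θ * (ε * (Lh * σ * cpm * cnp)) := by ring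
                _ ≤ 1 * (ε * (Lh * σ * cpm * cnp)) := h3
          _ ≤ ε * (4 * Lh * max σ LJ * cpm * cnp ^ 2) := by
              rw [one_mul]
              exact mul_le_mul_of_nonneg_left h2 hε.le
      have hbase : Dmin ≤ τ 0 * Real.sqrt n := by
        rw [hτ0, hrhs]
        exact hbase2
      linarith
    | succ k ih =>
      obtain ⟨hxk, hτk, hτΔk, hΔk⟩ := hinv k
      have hΔpos : 0 < Δ k := lt_of_lt_of_le (mul_pos hτk hsn) hτΔk
      rcases hstep k with ⟨-, -, hΔ, -⟩ | ⟨hη, hd, hxd, hθd, hρeq, hcase⟩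
      · rw [hΔ]; exact ih
      · rcases hcase with ⟨-, -, hΔ, -⟩ | ⟨hρα, -, -, hΔ, -⟩ | ⟨hρα, -, -, hΔ, -⟩
        · rw [hΔ]; exact le_min (by linarith) (by linarith)
        · rw [hΔ]; linarith [hkey k hη hd hxd hθd hρeq hρα]
        · rw [hΔ]; linarith [hkey k hη hd hxd hθd hρeq hρα]
  exact fun k _ => main k
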